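/- If F_μ : B(X) → B(X) is a Ćirić contraction with constant k ∈ (0,1), then for every l ≥ 1 and all V, d(F_μ^l V, F_μ^l V_μ) ≤ k^l · max( ‖V − V_μ‖, ‖V − F_μ V‖, ‖V_μ − F_μ V_μ‖, (1/2^l)(‖V − F_μ V_μ‖ + ‖V_μ − F_μ V‖) ), where V_μ is the fixed point of F_μ. -/
import Mathlib


/-- Ćirić contraction on a normed space. -/
def IsCiricN {E : Type*} [NormedAddCommGroup E] (F : E → E) (k : ℝ) : Prop :=
  ∀ V V' : E, ‖F V - F V'‖ ≤
    k * max ‖V - V'‖ (max ‖V - F V‖ (max ‖V' - F V'‖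
      ((‖V - F V'‖ + ‖V' - F V‖) / 2)))

private lemma ciric_fix {E : Type*} [NormedAddCommGroup E]
    (F : E → E) (k : ℝ) (hk : k ∈ Set.Ioo (0:ℝ) 1) (hF : IsCiricN F k)
    (Vμ : E) (hfix : F Vμ = Vμ) (W : E) :
    ‖F W - Vμ‖ ≤ k * max ‖W - Vμ‖ ‖W - F W‖ := by
  obtain ⟨hk0, hk1⟩ := hk
  have h := hF W Vμ
  rw [hfix, sub_self, norm_zero] at h
  set a := ‖W - Vμ‖ with ha
  set b := ‖W - F W‖ with hb
  have he : ‖Vμ - F W‖ = ‖F W - Vμ‖ := norm_sub_rev _ _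
  rw [he] at h
  set e := ‖F W - Vμ‖ with hee
  have ha0 : 0 ≤ a := norm_nonneg _
  have he0 : 0 ≤ e := norm_nonneg _
  by_cases hc : (a + e) / 2 ≤ max a b
  · refine h.trans (mul_le_mul_of_nonneg_left ?_ hk0.le)
    apply max_le (le_max_left _ _)
    apply max_le (le_max_right _ _)
    exact max_le (le_trans ha0 (le_max_left _ _)) hc
  · push_neg at hc
    have hae : a < e := by
      have := lt_of_le_of_lt (le_max_left a b) hc
      linarith
    have hmax : max a (max b (max 0 ((a + e) / 2))) = (a + e) / 2 := by
      have h1 : a ≤ (a + e) / 2 := by linarith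
      have h2 : b ≤ (a + e) / 2 := le_of_lt (lt_of_le_of_lt (le_max_right a b) hc)
      have h3 : (0:ℝ) ≤ (a + e) / 2 := by positivity
      rw [max_eq_right h3, max_eq_right h2, max_eq_right h1]
    rw [hmax] at h
    have : e ≤ k * a := by nlinarith
    calc e ≤ k * a := this
    _ ≤ k * max a b := by
        have := le_max_left a b
        nlinarith

private lemma ciric_step {E : Type*} [NormedAddCommGroup E]
    (F : E → E) (k : ℝ) (hk : k ∈ Set.Ioo (0:ℝ) 1) (hF : IsCiricN F k)
    (W : E) : ‖F W - F (F W)‖ ≤ k * ‖W - F W‖ := by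
  obtain ⟨hk0, hk1⟩ := hk
  have h := hF (F W) W
  set u := ‖W - F W‖ with hu
  set v := ‖F W - F (F W)‖ with hv
  have h2 : ‖W - F (F W)‖ ≤ u + v := by
    calc ‖W - F (F W)‖ = ‖(W - F W) + (F W - F (F W))‖ := by rw [sub_add_sub_cancel]
    _ ≤ u + v := norm_add_le _ _
  have hu0 : 0 ≤ u := norm_nonneg _
  have hv0 : 0 ≤ v := norm_nonneg _
  have hmax : max ‖F W - W‖ (max v (max u ((‖F W - F W‖ + ‖W - F (F W)‖) / 2))) ≤ max u v := by
    rw [norm_sub_rev, sub_self, norm_zero, zero_add]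
    apply max_le (le_max_left _ _)
    apply max_le (le_max_right _ _)
    apply max_le (le_max_left _ _)
    rcases le_total u v with h' | h'
    · calc ‖W - F (F W)‖ / 2 ≤ (u + v) / 2 := by linarith
      _ ≤ v := by linarith
      _ ≤ max u v := le_max_right _ _
    · calc ‖W - F (F W)‖ / 2 ≤ (u + v) / 2 := by linarith
      _ ≤ u := by linarith
      _ ≤ max u v := le_max_left _ _
  have h3 : v ≤ k * max u v := by
    calc v = ‖F (F W) - F W‖ := (norm_sub_rev _ _).symm.trans rfl
    _ ≤ _ := h
    _ ≤ k * max u v := mul_le_mul_of_nonneg_left hmax hk0.le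
  rcases le_total v u with h' | h'
  · rw [max_eq_left h'] at h3; exact h3
  · rw [max_eq_right h'] at h3
    have hv' : v ≤ 0 := by nlinarith
    have := mul_nonneg hk0.le hu0
    linarith

theorem stmt7 {E : Type*} [NormedAddCommGroup E] [CompleteSpace E]
    (F : E → E) (k : ℝ) (hk : k ∈ Set.Ioo (0:ℝ) 1) (hF : IsCiricN F k)
    (Vμ : E) (hfix : F Vμ = Vμ) :
    ∀ l : ℕ, 1 ≤ l → ∀ V : E,
      ‖F^[l] V - F^[l] Vμ‖ ≤
        k ^ l * max ‖V - Vμ‖ (max ‖V - F V‖ (max ‖Vμ - F Vμ‖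
          ((1 / 2 ^ l) * (‖V - F Vμ‖ + ‖Vμ - F V‖)))) := by
  obtain ⟨hk0, hk1⟩ := hk
  intro l hl V
  set M := max ‖V - Vμ‖ ‖V - F V‖ with hM
  have hμ : F^[l] Vμ = Vμ := Function.iterate_fixed hfix l
  rw [hμ]
  have key : ∀ n : ℕ, ‖F^[n] V - Vμ‖ ≤ k ^ n * M ∧
      ‖F^[n] V - F (F^[n] V)‖ ≤ k ^ n * M := by
    intro n
    induction n with
    | zero => simpa using ⟨le_max_left _ _, le_max_right _ _⟩
    | succ n ih =>
      obtain ⟨ih1, ih2⟩ := ih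
      constructor
      · rw [Function.iterate_succ_apply']
        calc ‖F (F^[n] V) - Vμ‖ ≤ k * max ‖F^[n] V - Vμ‖ ‖F^[n] V - F (F^[n] V)‖ :=
              ciric_fix F k ⟨hk0, hk1⟩ hF Vμ hfix _
        _ ≤ k * (k ^ n * M) := by
              apply mul_le_mul_of_nonneg_left (max_le ih1 ih2) (le_of_lt hk0)
        _ = k ^ (n + 1) * M := by ring
      · rw [Function.iterate_succ_apply']
        calc ‖F (F^[n] V) - F (F (F^[n] V))‖ ≤ k * ‖F^[n] V - F (F^[n] V)‖ :=
              ciric_step F k ⟨hk0, hk1⟩ hF _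
        _ ≤ k * (k ^ n * M) := by
              apply mul_le_mul_of_nonneg_left ih2 (le_of_lt hk0)
        _ = k ^ (n + 1) * M := by ring
  calc ‖F^[l] V - Vμ‖ ≤ k ^ l * M := (key l).1
  _ ≤ _ := by
      apply mul_le_mul_of_nonneg_left _ (by positivity)
      apply max_le (le_max_left _ _)
      exact (le_max_left _ _).trans (le_max_right _ _)
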